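/- (Theorem, operator form) Let n, m be positive natural numbers, Δt ∈ ℝ, and for each i = 1, ..., m let G_i : ℝ^n → ℝ^n (the right-hand side G(i·Δt, ·) at time step i) and N_i : ℝ^n → ℝ^n (the i-th implicit Euler step). Let x₀, x₁, ..., x_m ∈ ℝ^n satisfy N_i(x_{i-1}) = x_i, suppose G_i is differentiable at x_i and N_i is differentiable at x_{i-1}, that for all y in some neighborhood of x_{i-1} the residual identity N_i(y) - y - Δt · G_i(N_i(y)) = 0 holds, and that the continuous linear map A_i = id - Δt • (fderiv G_i x_i) is invertible with inverse given by a continuous linear equivalence e_i. Then the derivative E' = fderiv (N_m ∘ ... ∘ N_1) x₀ of the composite implicit Euler map at x₀ is invertible, and its inverse is the product of the residual Jacobians in forward order: (A_1 ∘ A_2 ∘ ... ∘ A_m) ∘ E' = id and E' ∘ (A_1 ∘ A_2 ∘ ... ∘ A_m) = id. -/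

import Mathlib

/-- Auxiliary chain lemma: derivative of a composite of maps along an orbit. -/
lemma chain_aux {E : Type*} [NormedAddCommGroup E] [NormedSpace ℝ E] :
    ∀ (m : ℕ) (f : Fin m → E → E) (ε : Fin m → (E ≃L[ℝ] E))
      (x : Fin (m + 1) → E),
      (∀ i : Fin m, f i (x i.castSucc) = x i.succ) →
      (∀ i : Fin m, HasFDerivAt (f i) ((ε i).symm : E →L[ℝ] E) (x i.castSucc)) →
      ∃ D : E →L[ℝ] E,
        HasFDerivAt (fun y => (List.ofFn f).foldl (fun z g => g z) y) D (x 0) ∧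
        ((List.ofFn fun i => ((ε i : E →L[ℝ] E))).prod).comp D =
          ContinuousLinearMap.id ℝ E ∧
        D.comp ((List.ofFn fun i => ((ε i : E →L[ℝ] E))).prod) =
          ContinuousLinearMap.id ℝ E := by
  intro m
  induction m with
  | zero =>
    intro f ε x _ _
    refine ⟨ContinuousLinearMap.id ℝ E, ?_, ?_, ?_⟩
    · simp only [List.ofFn_zero, List.foldl_nil]; exact hasFDerivAt_id (x 0)
    · simp [ContinuousLinearMap.one_def]
    · simp [ContinuousLinearMap.one_def]
  | succ m ih =>
    intro f ε x hstep hd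
    obtain ⟨D', hD', h1, h2⟩ := ih (fun i => f i.succ) (fun i => ε i.succ)
      (fun j => x j.succ)
      (fun i => by
        have := hstep i.succ
        simpa only [Fin.succ_castSucc] using this)
      (fun i => by
        have := hd i.succ
        simpa only [Fin.succ_castSucc] using this)
    have hx0 : f 0 (x 0) = x 1 := by
      have := hstep 0
      simpa using this
    refine ⟨D'.comp ((ε 0).symm : E →L[ℝ] E), ?_, ?_, ?_⟩
    · have hfun : (fun y => (List.ofFn f).foldl (fun z g => g z) y) =
          (fun y => (List.ofFn fun i => f i.succ).foldl (fun z g => g z) y) ∘ (f 0) := by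
        funext y
        simp [List.ofFn_succ]
      rw [hfun]
      have hd0 : HasFDerivAt (f 0) ((ε 0).symm : E →L[ℝ] E) (x 0) := by
        have := hd 0
        simpa using this
      have hD'' : HasFDerivAt (fun y => (List.ofFn fun i => f i.succ).foldl
          (fun z g => g z) y) D' (f 0 (x 0)) := by
        rw [hx0]
        have h01 : (fun j : Fin (m + 1) => x j.succ) 0 = x 1 := by simp
        rw [← h01]
        exact hD'
      exact hD''.comp (x 0) hd0
    · rw [List.ofFn_succ, List.prod_cons]
      show ((ε 0 : E →L[ℝ] E).comp _).comp _ = _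
      rw [ContinuousLinearMap.comp_assoc, ← ContinuousLinearMap.comp_assoc _ D' _,
        h1, ContinuousLinearMap.id_comp, ContinuousLinearEquiv.coe_comp_coe_symm]
    · rw [List.ofFn_succ, List.prod_cons]
      show (D'.comp _).comp ((ε 0 : E →L[ℝ] E).comp _) = _
      rw [ContinuousLinearMap.comp_assoc,
        ← ContinuousLinearMap.comp_assoc ((ε 0).symm : E →L[ℝ] E) (ε 0 : E →L[ℝ] E) _,
        ContinuousLinearEquiv.coe_symm_comp_coe, ContinuousLinearMap.id_comp, h2]

theorem implicit_euler_fderiv_inverse (n m : ℕ) (hn : 0 < n) (hm : 0 < m)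
    (Δt : ℝ)
    (G N : Fin m → (EuclideanSpace ℝ (Fin n) → EuclideanSpace ℝ (Fin n)))
    (x : Fin (m + 1) → EuclideanSpace ℝ (Fin n))
    (e : Fin m → (EuclideanSpace ℝ (Fin n) ≃L[ℝ] EuclideanSpace ℝ (Fin n)))
    (hstep : ∀ i : Fin m, N i (x i.castSucc) = x i.succ)
    (hG : ∀ i : Fin m, DifferentiableAt ℝ (G i) (x i.succ))
    (hN : ∀ i : Fin m, DifferentiableAt ℝ (N i) (x i.castSucc))
    (hres : ∀ i : Fin m, ∀ᶠ y in nhds (x i.castSucc),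
      N i y - y - Δt • G i (N i y) = 0)
    (he : ∀ i : Fin m,
      (e i : EuclideanSpace ℝ (Fin n) →L[ℝ] EuclideanSpace ℝ (Fin n)) =
        ContinuousLinearMap.id ℝ (EuclideanSpace ℝ (Fin n)) -
          Δt • fderiv ℝ (G i) (x i.succ)) :
    (List.ofFn (fun i =>
        ContinuousLinearMap.id ℝ (EuclideanSpace ℝ (Fin n)) -
          Δt • fderiv ℝ (G i) (x i.succ))).prod.comp
        (fderiv ℝ (fun y => (List.ofFn N).foldl (fun z f => f z) y) (x 0)) =
      ContinuousLinearMap.id ℝ (EuclideanSpace ℝ (Fin n)) ∧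
    (fderiv ℝ (fun y => (List.ofFn N).foldl (fun z f => f z) y) (x 0)).comp
        (List.ofFn (fun i =>
          ContinuousLinearMap.id ℝ (EuclideanSpace ℝ (Fin n)) -
            Δt • fderiv ℝ (G i) (x i.succ))).prod =
      ContinuousLinearMap.id ℝ (EuclideanSpace ℝ (Fin n)) := by
  -- Step 1: each N i has derivative (e i).symm at x i.castSucc
  have key : ∀ i : Fin m, HasFDerivAt (N i)
      ((e i).symm : EuclideanSpace ℝ (Fin n) →L[ℝ] EuclideanSpace ℝ (Fin n))
      (x i.castSucc) := by
    intro i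
    have hNd : DifferentiableAt ℝ (N i) (x i.castSucc) := hN i
    have hGq : DifferentiableAt ℝ (G i) (N i (x i.castSucc)) := by
      rw [hstep i]; exact hG i
    have hGN : DifferentiableAt ℝ (fun y => G i (N i y)) (x i.castSucc) :=
      hGq.comp _ hNd
    have hres0 : fderiv ℝ (fun y => N i y - y - Δt • G i (N i y)) (x i.castSucc) = 0 := by
      have heq : (fun y => N i y - y - Δt • G i (N i y)) =ᶠ[nhds (x i.castSucc)]
          (fun _ => (0 : EuclideanSpace ℝ (Fin n))) := hres i
      rw [heq.fderiv_eq, fderiv_fun_const]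
      rfl
    have hcomp : fderiv ℝ (fun y => G i (N i y)) (x i.castSucc) =
        (fderiv ℝ (G i) (x i.succ)).comp (fderiv ℝ (N i) (x i.castSucc)) := by
      have h := fderiv_comp (x i.castSucc) hGq hNd
      simp only [Function.comp_def] at h
      rw [← hstep i]
      exact h
    have hcalc : fderiv ℝ (fun y => N i y - y - Δt • G i (N i y)) (x i.castSucc) =
        fderiv ℝ (N i) (x i.castSucc) -
          ContinuousLinearMap.id ℝ (EuclideanSpace ℝ (Fin n)) -
          Δt • ((fderiv ℝ (G i) (x i.succ)).comp (fderiv ℝ (N i) (x i.castSucc))) := by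
      rw [fderiv_fun_sub (hNd.fun_sub differentiableAt_fun_id) (hGN.fun_const_smul Δt),
        fderiv_fun_sub hNd differentiableAt_fun_id, fderiv_fun_id, fderiv_fun_const_smul hGN, hcomp]
    have heq0 : fderiv ℝ (N i) (x i.castSucc) -
        ContinuousLinearMap.id ℝ (EuclideanSpace ℝ (Fin n)) -
        Δt • ((fderiv ℝ (G i) (x i.succ)).comp (fderiv ℝ (N i) (x i.castSucc))) = 0 := by
      rw [← hcalc]; exact hres0
    have heD : ((e i : EuclideanSpace ℝ (Fin n) →L[ℝ] EuclideanSpace ℝ (Fin n))).comp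
        (fderiv ℝ (N i) (x i.castSucc)) =
        ContinuousLinearMap.id ℝ (EuclideanSpace ℝ (Fin n)) := by
      rw [he i]
      refine ContinuousLinearMap.ext fun v => ?_
      have h0v := congrFun (congrArg
        (fun (L : EuclideanSpace ℝ (Fin n) →L[ℝ] EuclideanSpace ℝ (Fin n)) =>
          (L : EuclideanSpace ℝ (Fin n) → EuclideanSpace ℝ (Fin n))) heq0) v
      simp only [ContinuousLinearMap.sub_apply, ContinuousLinearMap.smul_apply,
        ContinuousLinearMap.id_apply, ContinuousLinearMap.coe_comp', Function.comp_apply,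
        ContinuousLinearMap.zero_apply, ContinuousLinearMap.coe_sub',
        ContinuousLinearMap.coe_smul', ContinuousLinearMap.comp_apply] at h0v ⊢
      rwa [sub_right_comm, sub_eq_zero] at h0v
    have hDval : fderiv ℝ (N i) (x i.castSucc) =
        ((e i).symm : EuclideanSpace ℝ (Fin n) →L[ℝ] EuclideanSpace ℝ (Fin n)) := by
      have h3 := congrArg
        (fun L : EuclideanSpace ℝ (Fin n) →L[ℝ] EuclideanSpace ℝ (Fin n) =>
          ((e i).symm : EuclideanSpace ℝ (Fin n) →L[ℝ] EuclideanSpace ℝ (Fin n)).comp L) heD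
      simp only at h3
      rwa [← ContinuousLinearMap.comp_assoc, ContinuousLinearEquiv.coe_symm_comp_coe,
        ContinuousLinearMap.id_comp, ContinuousLinearMap.comp_id] at h3
    rw [← hDval]
    exact hNd.hasFDerivAt
  obtain ⟨D, hD, h1, h2⟩ := chain_aux m N e x hstep key
  have hfd : fderiv ℝ (fun y => (List.ofFn N).foldl (fun z f => f z) y) (x 0) = D :=
    hD.fderiv
  have hprod : (List.ofFn (fun i =>
      ContinuousLinearMap.id ℝ (EuclideanSpace ℝ (Fin n)) -
        Δt • fderiv ℝ (G i) (x i.succ))).prod =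
      (List.ofFn fun i =>
        ((e i : EuclideanSpace ℝ (Fin n) →L[ℝ] EuclideanSpace ℝ (Fin n)))).prod := by
    congr 1
    exact congrArg List.ofFn (funext fun i => (he i).symm)
  rw [hfd, hprod]
  exact ⟨h1, h2⟩
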